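/- Let T : ℕ → ℝ be a strictly increasing sequence of tenor dates T_0 < T_1 < T_2 < ⋯. Let q : ℝ → ℝ be antitone with q(t) > 0 for all t and set Q(T) := ∫_0^T q(u) du. Let P : ℝ → ℝ satisfy P(T_i) > 0 for all i ≥ 1. For n ≥ 1 define A_n := ∑_{i=1}^n (T_i − T_{i−1})·P(T_i) and A^d_n := ∑_{i=1}^n (Q(T_i) − Q(T_{i−1}))·P(T_i). Then for every n ≥ 1, A_{n+1}·A^d_n ≥ A_n·A^d_{n+1}; that is, the ratio A_n/A^d_n is nondecreasing in n. -/
import Mathlib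


open MeasureTheory Finset

/-- The ratio `A_n/A^d_n` of the discrete-time standardized risk-free annuity to the
defaultable one is nondecreasing in `n`, in cross-multiplied form:
`A_{n+1}·A^d_n ≥ A_n·A^d_{n+1}` for all `n ≥ 1`. -/
theorem stmt_11
    (T : ℕ → ℝ) (hT : StrictMono T)
    (q : ℝ → ℝ) (hq : Antitone q) (hq0 : ∀ t, 0 < q t)
    (Q : ℝ → ℝ) (hQ : ∀ x, Q x = ∫ u in (0:ℝ)..x, q u)
    (P : ℝ → ℝ) (hP0 : ∀ i, 1 ≤ i → 0 < P (T i))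
    (A Ad : ℕ → ℝ)
    (hA : ∀ n, A n = ∑ i ∈ Icc 1 n, (T i - T (i - 1)) * P (T i))
    (hAd : ∀ n, Ad n = ∑ i ∈ Icc 1 n, (Q (T i) - Q (T (i - 1))) * P (T i)) :
    ∀ n : ℕ, 1 ≤ n → A n * Ad (n + 1) ≤ A (n + 1) * Ad n := by
  have hint : ∀ a b : ℝ, IntervalIntegrable q volume a b := fun a b =>
    hq.intervalIntegrable
  have hQdiff : ∀ a b : ℝ, Q b - Q a = ∫ u in a..b, q u := by
    intro a b
    rw [hQ, hQ, ← intervalIntegral.integral_add_adjacent_intervals (hint 0 a) (hint a b)]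
    ring
  have keyL : ∀ a b : ℝ, a ≤ b → q b * (b - a) ≤ Q b - Q a := by
    intro a b hab
    rw [hQdiff]
    have := intervalIntegral.integral_mono_on hab (intervalIntegrable_const (c := q b))
      (hint a b) (fun u hu => hq hu.2)
    simpa [mul_comm] using this
  have keyR : ∀ a b : ℝ, a ≤ b → Q b - Q a ≤ q a * (b - a) := by
    intro a b hab
    rw [hQdiff]
    have := intervalIntegral.integral_mono_on hab (hint a b)
      (intervalIntegrable_const (c := q a)) (fun u hu => hq hu.1)
    simpa [mul_comm] using this
  intro n hn
  have hTn : T n ≤ T (n + 1) := (hT (Nat.lt_succ_self n)).le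
  set d := T (n + 1) - T n with hd
  set e := Q (T (n + 1)) - Q (T n) with he
  have hd0 : 0 ≤ d := by simp [hd]; linarith
  have hPn : 0 < P (T (n + 1)) := hP0 (n + 1) (by omega)
  have hsucc : (n + 1 : ℕ) - 1 = n := rfl
  have hAsucc : A (n + 1) = A n + d * P (T (n + 1)) := by
    rw [hA, hA, Finset.sum_Icc_succ_top (by omega)]
    simp [hd]
  have hAdsucc : Ad (n + 1) = Ad n + e * P (T (n + 1)) := by
    rw [hAd, hAd, Finset.sum_Icc_succ_top (by omega)]
    simp [he]
  have hmain : e * A n ≤ d * Ad n := by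
    rw [hA, hAd, Finset.mul_sum, Finset.mul_sum]
    apply Finset.sum_le_sum
    intro i hi
    simp only [Finset.mem_Icc] at hi
    have hti : T (i - 1) ≤ T i := (hT.monotone (Nat.sub_le i 1))
    have hqin : q (T n) ≤ q (T i) := hq (hT.monotone hi.2)
    have hQi : q (T i) * (T i - T (i - 1)) ≤ Q (T i) - Q (T (i - 1)) := keyL _ _ hti
    have heB : e ≤ q (T n) * d := keyR _ _ hTn
    have hPi : 0 < P (T i) := hP0 i hi.1
    have hqn : 0 < q (T n) := hq0 _
    have h1 : e * (T i - T (i - 1)) ≤ d * (Q (T i) - Q (T (i - 1))) := by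
      calc e * (T i - T (i - 1)) ≤ q (T n) * d * (T i - T (i - 1)) :=
            mul_le_mul_of_nonneg_right heB (sub_nonneg.2 hti)
        _ ≤ q (T i) * (T i - T (i - 1)) * d := by
            nlinarith [mul_le_mul_of_nonneg_right hqin (sub_nonneg.2 hti)]
        _ ≤ (Q (T i) - Q (T (i - 1))) * d := mul_le_mul_of_nonneg_right hQi hd0
        _ = d * (Q (T i) - Q (T (i - 1))) := mul_comm _ _
    have := mul_le_mul_of_nonneg_right h1 hPi.le
    linarith [this]
  rw [hAsucc, hAdsucc]
  nlinarith [mul_le_mul_of_nonneg_right hmain hPn.le]
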